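/- Let k ≥ 2 and let T_k be the complete tripartite graph K_{2^k+1, 2^{k-1}(2^k+1), 2^{k-1}(2^k-1)}. The distance Laplacian matrix of T_k has eigenvalues: 0 with multiplicity 1; 3·2^{2k-1} + 3·2^{k-1} + 1 with multiplicity 2^{k-1}(2^k+1) − 1; 3·2^{2k-1} + 2^{k-1} + 1 with multiplicity 2^{k-1}(2^k−1) − 1; 2^{2k} + 2^{k+1} + 2 with multiplicity 2^k; and 2^{2k} + 2^k + 1 with multiplicity 2. In particular, T_k is distance Laplacian integral. -/

import Mathlib

open Polynomial

/-- The part of a vertex of `Fin a ⊕ Fin b ⊕ Fin c`. -/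
def tripart {a b c : ℕ} : Fin a ⊕ Fin b ⊕ Fin c → Fin 3
  | Sum.inl _ => 0
  | Sum.inr (Sum.inl _) => 1
  | Sum.inr (Sum.inr _) => 2

/-- The complete tripartite graph `K_{a,b,c}`. -/
def completeTripartiteGraph (a b c : ℕ) : SimpleGraph (Fin a ⊕ Fin b ⊕ Fin c) where
  Adj u v := tripart u ≠ tripart v
  symm := ⟨fun _ _ h => h.symm⟩
  loopless := ⟨fun _ h => h rfl⟩

/-- The distance matrix of a graph. -/
noncomputable def distMatrix {V : Type*} [Fintype V] (G : SimpleGraph V) : Matrix V V ℝ :=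
  Matrix.of fun u v => (G.dist u v : ℝ)

/-- The diagonal matrix of transmissions (sums of distances to all other vertices). -/
noncomputable def transMatrix {V : Type*} [Fintype V] [DecidableEq V] (G : SimpleGraph V) :
    Matrix V V ℝ :=
  Matrix.diagonal fun v => ∑ u, (G.dist v u : ℝ)

/-- The distance Laplacian matrix `D^L = Tr - D`. -/
noncomputable def distLapMatrix {V : Type*} [Fintype V] [DecidableEq V] (G : SimpleGraph V) :
    Matrix V V ℝ :=
  transMatrix G - distMatrix G

/-- The co-centralizer graph of `PSL(2, 2^k)`:
the complete tripartite graph `K_{2^k+1, 2^{k-1}(2^k+1), 2^{k-1}(2^k-1)}`. -/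
def pslGraph (k : ℕ) :=
  completeTripartiteGraph (2 ^ k + 1) (2 ^ (k - 1) * (2 ^ k + 1)) (2 ^ (k - 1) * (2 ^ k - 1))

namespace PSLAux

abbrev Vt (a b c : ℕ) := Fin a ⊕ Fin b ⊕ Fin c

lemma tri_dist {a b c : ℕ} (ha : 0 < a) (hb : 0 < b) (u v : Vt a b c) :
    (completeTripartiteGraph a b c).dist u v =
      if u = v then 0 else if tripart u = tripart v then 2 else 1 := by
  by_cases huv : u = v
  · simp [huv]
  by_cases ht : tripart u = tripart v
  · obtain ⟨w, hw⟩ : ∃ w : Vt a b c, tripart w ≠ tripart u := by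
      by_cases h0 : tripart u = 0
      · refine ⟨Sum.inr (Sum.inl ⟨0, hb⟩), ?_⟩
        rw [show tripart (Sum.inr (Sum.inl ⟨0, hb⟩) : Vt a b c) = 1 from rfl, h0]
        decide
      · exact ⟨Sum.inl ⟨0, ha⟩, fun h => h0 (h.symm.trans rfl)⟩
    have hadj1 : (completeTripartiteGraph a b c).Adj u w := Ne.symm hw
    have hadj2 : (completeTripartiteGraph a b c).Adj w v := fun h => hw (h.trans ht.symm)
    have p : (completeTripartiteGraph a b c).Walk u v :=
      SimpleGraph.Walk.cons hadj1 (SimpleGraph.Walk.cons hadj2 SimpleGraph.Walk.nil)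
    have h2 : (completeTripartiteGraph a b c).dist u v ≤ 2 := by
      simpa using SimpleGraph.dist_le
        (SimpleGraph.Walk.cons hadj1 (SimpleGraph.Walk.cons hadj2 SimpleGraph.Walk.nil))
    have h0 : (completeTripartiteGraph a b c).dist u v ≠ 0 := by
      rw [SimpleGraph.dist_ne_zero_iff_ne_and_reachable]
      exact ⟨huv, p.reachable⟩
    have h1 : (completeTripartiteGraph a b c).dist u v ≠ 1 := by
      rw [Ne, SimpleGraph.dist_eq_one_iff_adj]
      intro hadj; exact hadj ht
    simp only [if_neg huv, if_pos ht]
    omega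
  · simp only [if_neg huv, if_neg ht]
    exact SimpleGraph.dist_eq_one_iff_adj.mpr ht

/-- Part sizes. -/
def ps (a b c : ℕ) : Vt a b c → ℕ
  | .inl _ => a
  | .inr (.inl _) => b
  | .inr (.inr _) => c

/-- The explicit form of the distance Laplacian of the complete tripartite graph. -/
def Nmat (a b c : ℕ) : Matrix (Vt a b c) (Vt a b c) ℝ :=
  Matrix.of fun u v =>
    match u, v with
    | .inl i, .inl i' => if i = i' then (a : ℝ) + b + c + a - 2 else -2
    | .inl _, _ => -1
    | .inr (.inl j), .inr (.inl j') => if j = j' then (a : ℝ) + b + c + b - 2 else -2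
    | .inr (.inl _), _ => -1
    | .inr (.inr l), .inr (.inr l') => if l = l' then (a : ℝ) + b + c + c - 2 else -2
    | .inr (.inr _), _ => -1

lemma sum_if_eq {m : ℕ} (i : Fin m) (x y : ℝ) :
    ∑ j : Fin m, (if i = j then x else y) = x + ((m : ℝ) - 1) * y := by
  have h : ∀ j : Fin m, (if i = j then x else y) = y + (if i = j then x - y else 0) := by
    intro j; split <;> ring
  simp_rw [h, Finset.sum_add_distrib, Finset.sum_ite_eq, Finset.sum_const, Finset.mem_univ,
    if_pos, Finset.card_univ, Fintype.card_fin, nsmul_eq_mul]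
  ring

lemma distLap_eq {a b c : ℕ} (ha : 0 < a) (hb : 0 < b) (hc : 0 < c) :
    distLapMatrix (completeTripartiteGraph a b c) = Nmat a b c := by
  ext u v
  simp only [distLapMatrix, transMatrix, distMatrix, Matrix.sub_apply, Matrix.diagonal_apply,
    Matrix.of_apply]
  simp only [tri_dist ha hb]
  by_cases huv : u = v
  · subst huv
    rw [if_pos rfl, if_pos rfl]
    push_cast
    rw [Fintype.sum_sum_type]
    rcases u with i | j | l <;>
    · simp only [Fintype.sum_sum_type, Nmat, Matrix.of_apply, Sum.inl.injEq, Sum.inr.injEq,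
        tripart, reduceCtorEq, if_false, if_true, Nat.cast_ite, Nat.cast_ofNat, Nat.cast_one,
        Nat.cast_zero]
      rw [sum_if_eq]
      simp only [Fin.ext_iff, Fin.val_zero, Fin.val_one, Fin.val_two, Nat.zero_ne_one,
        Nat.one_ne_zero, if_false, Finset.sum_const, Finset.card_univ, Fintype.card_fin,
        nsmul_eq_mul, mul_one, show (0:ℕ) ≠ 2 by omega, show (1:ℕ) ≠ 2 by omega,
        show (2:ℕ) ≠ 0 by omega, show (2:ℕ) ≠ 1 by omega]
      ring
  · rw [if_neg huv, if_neg huv]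
    rcases u with i | j | l <;> rcases v with i' | j' | l' <;>
      simp_all [Nmat, tripart, Fin.ext_iff, Sum.inl.injEq, Sum.inr.injEq] <;>
      omega


/-- Eigenvalues. -/
noncomputable def lam (a b c : ℕ) : Vt a b c → ℝ
  | .inl i => if (i : ℕ) = 0 then 0 else (a : ℝ) + b + c + a
  | .inr (.inl j) => if (j : ℕ) = 0 then (a : ℝ) + b + c else (a : ℝ) + b + c + b
  | .inr (.inr l) => if (l : ℕ) = 0 then (a : ℝ) + b + c else (a : ℝ) + b + c + c

/-- Matrix of eigenvectors (as columns). -/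
noncomputable def Pmat (a b c : ℕ) : Matrix (Vt a b c) (Vt a b c) ℝ :=
  Matrix.of fun v w =>
    match w with
    | .inl i => if (i : ℕ) = 0 then 1
        else (if v = Sum.inl i then 1 else 0) - (if v = Sum.inl ⟨0, i.pos⟩ then 1 else 0)
    | .inr (.inl j) => if (j : ℕ) = 0 then
          (match v with | .inl _ => (b : ℝ) | .inr (.inl _) => -(a : ℝ) | .inr (.inr _) => 0)
        else (if v = Sum.inr (Sum.inl j) then 1 else 0) -
          (if v = Sum.inr (Sum.inl ⟨0, j.pos⟩) then 1 else 0)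
    | .inr (.inr l) => if (l : ℕ) = 0 then
          (match v with | .inl _ => (c : ℝ) | .inr (.inl _) => 0 | .inr (.inr _) => -(a : ℝ))
        else (if v = Sum.inr (Sum.inr l) then 1 else 0) -
          (if v = Sum.inr (Sum.inr ⟨0, l.pos⟩) then 1 else 0)

/-- Inverse of `Pmat`. -/
noncomputable def Qmat (a b c : ℕ) : Matrix (Vt a b c) (Vt a b c) ℝ :=
  Matrix.of fun u v =>
    match u with
    | .inl i => if (i : ℕ) = 0 then 1 / ((a : ℝ) + b + c)
        else (if v = Sum.inl i then 1 else 0) -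
          (match v with | .inl _ => 1 / (a : ℝ) | _ => 0)
    | .inr (.inl j) => if (j : ℕ) = 0 then
          1 / ((a : ℝ) * ((a : ℝ) + b + c)) -
            (match v with | .inr (.inl _) => 1 / ((a : ℝ) * b) | _ => 0)
        else (if v = Sum.inr (Sum.inl j) then 1 else 0) -
          (match v with | .inr (.inl _) => 1 / (b : ℝ) | _ => 0)
    | .inr (.inr l) => if (l : ℕ) = 0 then
          1 / ((a : ℝ) * ((a : ℝ) + b + c)) -
            (match v with | .inr (.inr _) => 1 / ((a : ℝ) * c) | _ => 0)
        else (if v = Sum.inr (Sum.inr l) then 1 else 0) -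
          (match v with | .inr (.inr _) => 1 / (c : ℝ) | _ => 0)

lemma NP_eq (a b c : ℕ) :
    Nmat a b c * Pmat a b c = Pmat a b c * Matrix.diagonal (lam a b c) := by
  ext u w
  rw [Matrix.mul_apply, Matrix.mul_diagonal, Fintype.sum_sum_type, Fintype.sum_sum_type]
  rcases w with w0 | w0 | w0 <;> rcases u with i | j | l <;> by_cases hw0 : (w0 : ℕ) = 0 <;>
    simp only [Nmat, Pmat, lam, Matrix.of_apply, hw0, if_true, if_false, Sum.inl.injEq,
      Sum.inr.injEq, reduceCtorEq, mul_ite, ite_mul, mul_one, mul_zero, one_mul, zero_mul,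
      mul_sub, sub_mul, mul_neg, sub_zero, zero_sub, Finset.sum_sub_distrib,
      Finset.sum_ite_eq', Finset.mem_univ, if_pos, sum_if_eq, Finset.sum_const,
      Finset.card_univ, Fintype.card_fin, nsmul_eq_mul, smul_eq_mul, Finset.sum_neg_distrib]
  all_goals (try simp only [Fin.ext_iff, Fin.val_mk]) <;> (try split_ifs) <;> first | ring | omega


set_option maxHeartbeats 1000000 in
lemma QP_eq {a b c : ℕ} (ha : 0 < a) (hb : 0 < b) (hc : 0 < c) :
    Qmat a b c * Pmat a b c = 1 := by
  have haR : (a : ℝ) ≠ 0 := Nat.cast_ne_zero.mpr ha.ne'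
  have hbR : (b : ℝ) ≠ 0 := Nat.cast_ne_zero.mpr hb.ne'
  have hcR : (c : ℝ) ≠ 0 := Nat.cast_ne_zero.mpr hc.ne'
  have hnR : (a : ℝ) + b + c ≠ 0 := by positivity
  ext u w
  rw [Matrix.mul_apply, Matrix.one_apply, Fintype.sum_sum_type, Fintype.sum_sum_type]
  rcases u with u0 | u0 | u0 <;> rcases w with w0 | w0 | w0 <;>
    by_cases hu0 : (u0 : ℕ) = 0 <;> by_cases hw0 : (w0 : ℕ) = 0 <;>
    simp only [Qmat, Pmat, Matrix.of_apply, hu0, hw0, if_true, if_false, Sum.inl.injEq,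
      Sum.inr.injEq, reduceCtorEq, mul_ite, ite_mul, mul_one, mul_zero, one_mul, zero_mul,
      mul_sub, sub_mul, mul_neg, sub_zero, zero_sub, Finset.sum_sub_distrib,
      Finset.sum_ite_eq', Finset.mem_univ, if_pos, sum_if_eq, Finset.sum_const,
      Finset.card_univ, Fintype.card_fin, nsmul_eq_mul, smul_eq_mul, Finset.sum_neg_distrib]
  all_goals (try simp only [Fin.ext_iff, Fin.val_mk]) <;> (try split_ifs) <;>
    first | omega | ring1 | (field_simp [haR, hbR, hcR, hnR]; ring1) |
      (field_simp [haR, hbR, hcR, hnR])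


lemma prod_fin_ite {m : ℕ} (hm : 0 < m) (p q : ℝ[X]) :
    (∏ i : Fin m, if (i : ℕ) = 0 then p else q) = p * q ^ (m - 1) := by
  obtain ⟨m', rfl⟩ := Nat.exists_eq_succ_of_ne_zero hm.ne'
  rw [Fin.prod_univ_succ]
  simp [Fin.val_succ]

lemma charpoly_eq {a b c : ℕ} (ha : 0 < a) (hb : 0 < b) (hc : 0 < c) :
    (distLapMatrix (completeTripartiteGraph a b c)).charpoly =
      (X - C 0) * (X - C ((a : ℝ) + b + c)) ^ 2 * (X - C ((a : ℝ) + b + c + a)) ^ (a - 1) *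
        (X - C ((a : ℝ) + b + c + b)) ^ (b - 1) * (X - C ((a : ℝ) + b + c + c)) ^ (c - 1) := by
  rw [distLap_eq ha hb hc]
  have hdetP : (Pmat a b c).det ≠ 0 := by
    intro h
    have hd := congrArg Matrix.det (QP_eq ha hb hc)
    rw [Matrix.det_mul, Matrix.det_one, h, mul_zero] at hd
    exact zero_ne_one hd
  have hsim : (Nmat a b c).charmatrix * (Pmat a b c).map C =
      (Pmat a b c).map C * (Matrix.diagonal (lam a b c)).charmatrix := by
    unfold Matrix.charmatrix
    rw [Matrix.sub_mul, Matrix.mul_sub]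
    congr 1
    · exact Matrix.scalar_commute (X : ℝ[X]) (fun r => Commute.all _ _) _
    · rw [RingHom.mapMatrix_apply, RingHom.mapMatrix_apply, ← Matrix.map_mul, ← Matrix.map_mul,
        NP_eq]
  have h2 := congrArg Matrix.det hsim
  rw [Matrix.det_mul, Matrix.det_mul, ← RingHom.mapMatrix_apply, ← RingHom.map_det, ← Matrix.charpoly, ← Matrix.charpoly,
    mul_comm (C ((Pmat a b c).det))] at h2
  have h3 : (Nmat a b c).charpoly = (Matrix.diagonal (lam a b c)).charpoly :=
    mul_right_cancel₀ (Polynomial.C_ne_zero.mpr hdetP) h2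
  rw [h3]
  have hcm : (Matrix.diagonal (lam a b c)).charmatrix =
      Matrix.diagonal (fun v => (X : ℝ[X]) - C (lam a b c v)) := by
    ext u v
    by_cases h : u = v
    · subst h; rw [Matrix.charmatrix_apply_eq, Matrix.diagonal_apply_eq, Matrix.diagonal_apply_eq]
    · rw [Matrix.charmatrix_apply_ne _ _ _ h, Matrix.diagonal_apply_ne _ h,
        Matrix.diagonal_apply_ne _ h, map_zero, neg_zero]
  rw [Matrix.charpoly, hcm, Matrix.det_diagonal, Fintype.prod_sum_type, Fintype.prod_sum_type]
  simp only [lam, apply_ite (fun r : ℝ => (X : ℝ[X]) - C r)]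
  rw [prod_fin_ite ha, prod_fin_ite hb, prod_fin_ite hc]
  ring


lemma rm_pow (x μ : ℝ) (e : ℕ) :
    (((X - C x) ^ e : ℝ[X])).rootMultiplicity μ = if x = μ then e else 0 := by
  rcases eq_or_ne x μ with h | h
  · rw [if_pos h, h, Polynomial.rootMultiplicity_X_sub_C_pow]
  · rw [if_neg h, Polynomial.rootMultiplicity_eq_zero]
    simp only [Polynomial.IsRoot, Polynomial.eval_pow, Polynomial.eval_sub, Polynomial.eval_X,
      Polynomial.eval_C]
    exact pow_ne_zero e (sub_ne_zero_of_ne (Ne.symm h))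

lemma rm5 (x0 x1 x2 x3 x4 : ℝ) (e1 e2 e3 e4 : ℕ) (μ : ℝ) :
    ((X - C x0) * (X - C x1) ^ e1 * (X - C x2) ^ e2 * (X - C x3) ^ e3 *
        (X - C x4) ^ e4 : ℝ[X]).rootMultiplicity μ =
      (if x0 = μ then 1 else 0) + (if x1 = μ then e1 else 0) + (if x2 = μ then e2 else 0) +
        (if x3 = μ then e3 else 0) + (if x4 = μ then e4 else 0) := by
  have h0 : ((X - C x0 : ℝ[X])) ≠ 0 := Polynomial.X_sub_C_ne_zero x0
  have h1 : ((X - C x1 : ℝ[X])) ^ e1 ≠ 0 := pow_ne_zero _ (Polynomial.X_sub_C_ne_zero x1)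
  have h2 : ((X - C x2 : ℝ[X])) ^ e2 ≠ 0 := pow_ne_zero _ (Polynomial.X_sub_C_ne_zero x2)
  have h3 : ((X - C x3 : ℝ[X])) ^ e3 ≠ 0 := pow_ne_zero _ (Polynomial.X_sub_C_ne_zero x3)
  have h4 : ((X - C x4 : ℝ[X])) ^ e4 ≠ 0 := pow_ne_zero _ (Polynomial.X_sub_C_ne_zero x4)
  rw [Polynomial.rootMultiplicity_mul
      (mul_ne_zero (mul_ne_zero (mul_ne_zero (mul_ne_zero h0 h1) h2) h3) h4),
    Polynomial.rootMultiplicity_mul (mul_ne_zero (mul_ne_zero (mul_ne_zero h0 h1) h2) h3),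
    Polynomial.rootMultiplicity_mul (mul_ne_zero (mul_ne_zero h0 h1) h2),
    Polynomial.rootMultiplicity_mul (mul_ne_zero h0 h1),
    ← pow_one (X - C x0), rm_pow, rm_pow, rm_pow, rm_pow, rm_pow]

end PSLAux

set_option maxHeartbeats 3200000 in
theorem psl_cocentralizer_distance_laplacian_spectrum (k : ℕ) (hk : 2 ≤ k) :
    (distLapMatrix (pslGraph k)).charpoly.rootMultiplicity 0 = 1 ∧
    (distLapMatrix (pslGraph k)).charpoly.rootMultiplicity
      (3 * (2 : ℝ) ^ (2 * k - 1) + 3 * 2 ^ (k - 1) + 1) = 2 ^ (k - 1) * (2 ^ k + 1) - 1 ∧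
    (distLapMatrix (pslGraph k)).charpoly.rootMultiplicity
      (3 * (2 : ℝ) ^ (2 * k - 1) + 2 ^ (k - 1) + 1) = 2 ^ (k - 1) * (2 ^ k - 1) - 1 ∧
    (distLapMatrix (pslGraph k)).charpoly.rootMultiplicity
      ((2 : ℝ) ^ (2 * k) + 2 ^ (k + 1) + 2) = 2 ^ k ∧
    (distLapMatrix (pslGraph k)).charpoly.rootMultiplicity
      ((2 : ℝ) ^ (2 * k) + 2 ^ k + 1) = 2 ∧
    ∀ μ : ℝ, (distLapMatrix (pslGraph k)).charpoly.IsRoot μ → ∃ z : ℤ, μ = z := by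
  have hk1 : 1 ≤ 2 ^ k := Nat.one_le_two_pow
  have h2k1 : 2 ≤ 2 ^ (k - 1) := by
    calc 2 = 2 ^ 1 := rfl
    _ ≤ 2 ^ (k - 1) := Nat.pow_le_pow_right (by norm_num) (by omega)
  have h2k : 4 ≤ 2 ^ k := by
    calc 4 = 2 ^ 2 := rfl
    _ ≤ 2 ^ k := Nat.pow_le_pow_right (by norm_num) hk
  have ha : 0 < 2 ^ k + 1 := by positivity
  have hb : 0 < 2 ^ (k - 1) * (2 ^ k + 1) := by positivity
  have hc : 0 < 2 ^ (k - 1) * (2 ^ k - 1) := Nat.mul_pos (by positivity) (by omega)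
  have hchar := PSLAux.charpoly_eq ha hb hc
  rw [show pslGraph k = completeTripartiteGraph (2 ^ k + 1) (2 ^ (k - 1) * (2 ^ k + 1))
    (2 ^ (k - 1) * (2 ^ k - 1)) from rfl]
  -- real power identities in the atom x = 2 ^ (k-1)
  have hx : (2 : ℝ) ≤ (2 : ℝ) ^ (k - 1) := by
    calc (2 : ℝ) = 2 ^ 1 := (pow_one 2).symm
    _ ≤ 2 ^ (k - 1) := by apply pow_le_pow_right₀ (by norm_num) (by omega)
  have E2 : (2 : ℝ) ^ k = 2 * (2 : ℝ) ^ (k - 1) := by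
    rw [show k = (k - 1) + 1 from by omega]
    rw [Nat.add_sub_cancel, pow_succ]; ring
  have E3 : (2 : ℝ) ^ (2 * k - 1) = 2 * ((2 : ℝ) ^ (k - 1)) ^ 2 := by
    rw [show 2 * k - 1 = (k - 1) + k from by omega, pow_add, E2]; ring
  have E5 : (2 : ℝ) ^ (k + 1) = 4 * (2 : ℝ) ^ (k - 1) := by
    rw [show k + 1 = (k - 1) + 2 from by omega, pow_add]; ring
  have E4 : (2 : ℝ) ^ (2 * k) = 4 * ((2 : ℝ) ^ (k - 1)) ^ 2 := by
    rw [show 2 * k = (k - 1) + (k + 1) from by omega, pow_add, E5]; ring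
  have CA : ((2 ^ k + 1 : ℕ) : ℝ) = 2 * (2 : ℝ) ^ (k - 1) + 1 := by
    push_cast; rw [E2]
  have CB : ((2 ^ (k - 1) * (2 ^ k + 1) : ℕ) : ℝ) =
      2 * ((2 : ℝ) ^ (k - 1)) ^ 2 + (2 : ℝ) ^ (k - 1) := by
    push_cast; rw [E2]; ring
  have CC : ((2 ^ (k - 1) * (2 ^ k - 1) : ℕ) : ℝ) =
      2 * ((2 : ℝ) ^ (k - 1)) ^ 2 - (2 : ℝ) ^ (k - 1) := by
    rw [Nat.cast_mul, Nat.cast_sub hk1]; push_cast; rw [E2]; ring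
  have hrm : ∀ μ : ℝ, (distLapMatrix (completeTripartiteGraph (2 ^ k + 1)
      (2 ^ (k - 1) * (2 ^ k + 1)) (2 ^ (k - 1) * (2 ^ k - 1)))).charpoly.rootMultiplicity μ
      = (if ((0 : ℝ)) = μ then 1 else 0) +
        (if ((2 ^ k + 1 : ℕ) : ℝ) + ((2 ^ (k - 1) * (2 ^ k + 1) : ℕ) : ℝ) +
            ((2 ^ (k - 1) * (2 ^ k - 1) : ℕ) : ℝ) = μ then 2 else 0) +
        (if ((2 ^ k + 1 : ℕ) : ℝ) + ((2 ^ (k - 1) * (2 ^ k + 1) : ℕ) : ℝ) +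
            ((2 ^ (k - 1) * (2 ^ k - 1) : ℕ) : ℝ) + ((2 ^ k + 1 : ℕ) : ℝ) = μ
          then 2 ^ k + 1 - 1 else 0) +
        (if ((2 ^ k + 1 : ℕ) : ℝ) + ((2 ^ (k - 1) * (2 ^ k + 1) : ℕ) : ℝ) +
            ((2 ^ (k - 1) * (2 ^ k - 1) : ℕ) : ℝ) + ((2 ^ (k - 1) * (2 ^ k + 1) : ℕ) : ℝ) = μ
          then 2 ^ (k - 1) * (2 ^ k + 1) - 1 else 0) +
        (if ((2 ^ k + 1 : ℕ) : ℝ) + ((2 ^ (k - 1) * (2 ^ k + 1) : ℕ) : ℝ) +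
            ((2 ^ (k - 1) * (2 ^ k - 1) : ℕ) : ℝ) + ((2 ^ (k - 1) * (2 ^ k - 1) : ℕ) : ℝ) = μ
          then 2 ^ (k - 1) * (2 ^ k - 1) - 1 else 0) := by
    intro μ
    rw [hchar, PSLAux.rm5]
  refine ⟨?_, ?_, ?_, ?_, ?_, ?_⟩
  · rw [hrm _, CA, CB, CC]
    rw [if_pos rfl]
    rw [if_neg (show ¬(2 * (2 : ℝ) ^ (k - 1) + 1 + (2 * ((2 : ℝ) ^ (k - 1)) ^ 2 + (2 : ℝ) ^ (k - 1)) + (2 * ((2 : ℝ) ^ (k - 1)) ^ 2 - (2 : ℝ) ^ (k - 1)) = (0 : ℝ)) by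
      intro hcon; nlinarith [hx, sq_nonneg ((2 : ℝ) ^ (k - 1))])]
    rw [if_neg (show ¬(2 * (2 : ℝ) ^ (k - 1) + 1 + (2 * ((2 : ℝ) ^ (k - 1)) ^ 2 + (2 : ℝ) ^ (k - 1)) + (2 * ((2 : ℝ) ^ (k - 1)) ^ 2 - (2 : ℝ) ^ (k - 1)) + (2 * (2 : ℝ) ^ (k - 1) + 1) = (0 : ℝ)) by
      intro hcon; nlinarith [hx, sq_nonneg ((2 : ℝ) ^ (k - 1))])]
    rw [if_neg (show ¬(2 * (2 : ℝ) ^ (k - 1) + 1 + (2 * ((2 : ℝ) ^ (k - 1)) ^ 2 + (2 : ℝ) ^ (k - 1)) + (2 * ((2 : ℝ) ^ (k - 1)) ^ 2 - (2 : ℝ) ^ (k - 1)) + (2 * ((2 : ℝ) ^ (k - 1)) ^ 2 + (2 : ℝ) ^ (k - 1)) = (0 : ℝ)) by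
      intro hcon; nlinarith [hx, sq_nonneg ((2 : ℝ) ^ (k - 1))])]
    rw [if_neg (show ¬(2 * (2 : ℝ) ^ (k - 1) + 1 + (2 * ((2 : ℝ) ^ (k - 1)) ^ 2 + (2 : ℝ) ^ (k - 1)) + (2 * ((2 : ℝ) ^ (k - 1)) ^ 2 - (2 : ℝ) ^ (k - 1)) + (2 * ((2 : ℝ) ^ (k - 1)) ^ 2 - (2 : ℝ) ^ (k - 1)) = (0 : ℝ)) by
      intro hcon; nlinarith [hx, sq_nonneg ((2 : ℝ) ^ (k - 1))])]
    try simp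
  · rw [hrm _, CA, CB, CC, E3]
    rw [if_neg (show ¬((0 : ℝ) = 3 * (2 * ((2 : ℝ) ^ (k - 1)) ^ 2) + 3 * 2 ^ (k - 1) + 1) by
      intro hcon; nlinarith [hx, sq_nonneg ((2 : ℝ) ^ (k - 1))])]
    rw [if_neg (show ¬(2 * (2 : ℝ) ^ (k - 1) + 1 + (2 * ((2 : ℝ) ^ (k - 1)) ^ 2 + (2 : ℝ) ^ (k - 1)) + (2 * ((2 : ℝ) ^ (k - 1)) ^ 2 - (2 : ℝ) ^ (k - 1)) = 3 * (2 * ((2 : ℝ) ^ (k - 1)) ^ 2) + 3 * 2 ^ (k - 1) + 1) by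
      intro hcon; nlinarith [hx, sq_nonneg ((2 : ℝ) ^ (k - 1))])]
    rw [if_neg (show ¬(2 * (2 : ℝ) ^ (k - 1) + 1 + (2 * ((2 : ℝ) ^ (k - 1)) ^ 2 + (2 : ℝ) ^ (k - 1)) + (2 * ((2 : ℝ) ^ (k - 1)) ^ 2 - (2 : ℝ) ^ (k - 1)) + (2 * (2 : ℝ) ^ (k - 1) + 1) = 3 * (2 * ((2 : ℝ) ^ (k - 1)) ^ 2) + 3 * 2 ^ (k - 1) + 1) by
      intro hcon; nlinarith [hx, sq_nonneg ((2 : ℝ) ^ (k - 1))])]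
    rw [if_pos (show 2 * (2 : ℝ) ^ (k - 1) + 1 + (2 * ((2 : ℝ) ^ (k - 1)) ^ 2 + (2 : ℝ) ^ (k - 1)) + (2 * ((2 : ℝ) ^ (k - 1)) ^ 2 - (2 : ℝ) ^ (k - 1)) + (2 * ((2 : ℝ) ^ (k - 1)) ^ 2 + (2 : ℝ) ^ (k - 1)) = 3 * (2 * ((2 : ℝ) ^ (k - 1)) ^ 2) + 3 * 2 ^ (k - 1) + 1 by ring)]
    rw [if_neg (show ¬(2 * (2 : ℝ) ^ (k - 1) + 1 + (2 * ((2 : ℝ) ^ (k - 1)) ^ 2 + (2 : ℝ) ^ (k - 1)) + (2 * ((2 : ℝ) ^ (k - 1)) ^ 2 - (2 : ℝ) ^ (k - 1)) + (2 * ((2 : ℝ) ^ (k - 1)) ^ 2 - (2 : ℝ) ^ (k - 1)) = 3 * (2 * ((2 : ℝ) ^ (k - 1)) ^ 2) + 3 * 2 ^ (k - 1) + 1) by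
      intro hcon; nlinarith [hx, sq_nonneg ((2 : ℝ) ^ (k - 1))])]
    try simp
  · rw [hrm _, CA, CB, CC, E3]
    rw [if_neg (show ¬((0 : ℝ) = 3 * (2 * ((2 : ℝ) ^ (k - 1)) ^ 2) + 2 ^ (k - 1) + 1) by
      intro hcon; nlinarith [hx, sq_nonneg ((2 : ℝ) ^ (k - 1))])]
    rw [if_neg (show ¬(2 * (2 : ℝ) ^ (k - 1) + 1 + (2 * ((2 : ℝ) ^ (k - 1)) ^ 2 + (2 : ℝ) ^ (k - 1)) + (2 * ((2 : ℝ) ^ (k - 1)) ^ 2 - (2 : ℝ) ^ (k - 1)) = 3 * (2 * ((2 : ℝ) ^ (k - 1)) ^ 2) + 2 ^ (k - 1) + 1) by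
      intro hcon; nlinarith [hx, sq_nonneg ((2 : ℝ) ^ (k - 1))])]
    rw [if_neg (show ¬(2 * (2 : ℝ) ^ (k - 1) + 1 + (2 * ((2 : ℝ) ^ (k - 1)) ^ 2 + (2 : ℝ) ^ (k - 1)) + (2 * ((2 : ℝ) ^ (k - 1)) ^ 2 - (2 : ℝ) ^ (k - 1)) + (2 * (2 : ℝ) ^ (k - 1) + 1) = 3 * (2 * ((2 : ℝ) ^ (k - 1)) ^ 2) + 2 ^ (k - 1) + 1) by
      intro hcon; nlinarith [hx, sq_nonneg ((2 : ℝ) ^ (k - 1))])]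
    rw [if_neg (show ¬(2 * (2 : ℝ) ^ (k - 1) + 1 + (2 * ((2 : ℝ) ^ (k - 1)) ^ 2 + (2 : ℝ) ^ (k - 1)) + (2 * ((2 : ℝ) ^ (k - 1)) ^ 2 - (2 : ℝ) ^ (k - 1)) + (2 * ((2 : ℝ) ^ (k - 1)) ^ 2 + (2 : ℝ) ^ (k - 1)) = 3 * (2 * ((2 : ℝ) ^ (k - 1)) ^ 2) + 2 ^ (k - 1) + 1) by
      intro hcon; nlinarith [hx, sq_nonneg ((2 : ℝ) ^ (k - 1))])]
    rw [if_pos (show 2 * (2 : ℝ) ^ (k - 1) + 1 + (2 * ((2 : ℝ) ^ (k - 1)) ^ 2 + (2 : ℝ) ^ (k - 1)) + (2 * ((2 : ℝ) ^ (k - 1)) ^ 2 - (2 : ℝ) ^ (k - 1)) + (2 * ((2 : ℝ) ^ (k - 1)) ^ 2 - (2 : ℝ) ^ (k - 1)) = 3 * (2 * ((2 : ℝ) ^ (k - 1)) ^ 2) + 2 ^ (k - 1) + 1 by ring)]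
    try simp
  · rw [hrm _, CA, CB, CC, E4, E5]
    rw [if_neg (show ¬((0 : ℝ) = 4 * ((2 : ℝ) ^ (k - 1)) ^ 2 + (4 * (2 : ℝ) ^ (k - 1)) + 2) by
      intro hcon; nlinarith [hx, sq_nonneg ((2 : ℝ) ^ (k - 1))])]
    rw [if_neg (show ¬(2 * (2 : ℝ) ^ (k - 1) + 1 + (2 * ((2 : ℝ) ^ (k - 1)) ^ 2 + (2 : ℝ) ^ (k - 1)) + (2 * ((2 : ℝ) ^ (k - 1)) ^ 2 - (2 : ℝ) ^ (k - 1)) = 4 * ((2 : ℝ) ^ (k - 1)) ^ 2 + (4 * (2 : ℝ) ^ (k - 1)) + 2) by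
      intro hcon; nlinarith [hx, sq_nonneg ((2 : ℝ) ^ (k - 1))])]
    rw [if_pos (show 2 * (2 : ℝ) ^ (k - 1) + 1 + (2 * ((2 : ℝ) ^ (k - 1)) ^ 2 + (2 : ℝ) ^ (k - 1)) + (2 * ((2 : ℝ) ^ (k - 1)) ^ 2 - (2 : ℝ) ^ (k - 1)) + (2 * (2 : ℝ) ^ (k - 1) + 1) = 4 * ((2 : ℝ) ^ (k - 1)) ^ 2 + (4 * (2 : ℝ) ^ (k - 1)) + 2 by ring)]
    rw [if_neg (show ¬(2 * (2 : ℝ) ^ (k - 1) + 1 + (2 * ((2 : ℝ) ^ (k - 1)) ^ 2 + (2 : ℝ) ^ (k - 1)) + (2 * ((2 : ℝ) ^ (k - 1)) ^ 2 - (2 : ℝ) ^ (k - 1)) + (2 * ((2 : ℝ) ^ (k - 1)) ^ 2 + (2 : ℝ) ^ (k - 1)) = 4 * ((2 : ℝ) ^ (k - 1)) ^ 2 + (4 * (2 : ℝ) ^ (k - 1)) + 2) by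
      intro hcon; nlinarith [hx, sq_nonneg ((2 : ℝ) ^ (k - 1))])]
    rw [if_neg (show ¬(2 * (2 : ℝ) ^ (k - 1) + 1 + (2 * ((2 : ℝ) ^ (k - 1)) ^ 2 + (2 : ℝ) ^ (k - 1)) + (2 * ((2 : ℝ) ^ (k - 1)) ^ 2 - (2 : ℝ) ^ (k - 1)) + (2 * ((2 : ℝ) ^ (k - 1)) ^ 2 - (2 : ℝ) ^ (k - 1)) = 4 * ((2 : ℝ) ^ (k - 1)) ^ 2 + (4 * (2 : ℝ) ^ (k - 1)) + 2) by
      intro hcon; nlinarith [hx, sq_nonneg ((2 : ℝ) ^ (k - 1))])]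
    try simp
  · rw [hrm _, CA, CB, CC, E4, E2]
    rw [if_neg (show ¬((0 : ℝ) = 4 * ((2 : ℝ) ^ (k - 1)) ^ 2 + 2 * (2 : ℝ) ^ (k - 1) + 1) by
      intro hcon; nlinarith [hx, sq_nonneg ((2 : ℝ) ^ (k - 1))])]
    rw [if_pos (show 2 * (2 : ℝ) ^ (k - 1) + 1 + (2 * ((2 : ℝ) ^ (k - 1)) ^ 2 + (2 : ℝ) ^ (k - 1)) + (2 * ((2 : ℝ) ^ (k - 1)) ^ 2 - (2 : ℝ) ^ (k - 1)) = 4 * ((2 : ℝ) ^ (k - 1)) ^ 2 + 2 * (2 : ℝ) ^ (k - 1) + 1 by ring)]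
    rw [if_neg (show ¬(2 * (2 : ℝ) ^ (k - 1) + 1 + (2 * ((2 : ℝ) ^ (k - 1)) ^ 2 + (2 : ℝ) ^ (k - 1)) + (2 * ((2 : ℝ) ^ (k - 1)) ^ 2 - (2 : ℝ) ^ (k - 1)) + (2 * (2 : ℝ) ^ (k - 1) + 1) = 4 * ((2 : ℝ) ^ (k - 1)) ^ 2 + 2 * (2 : ℝ) ^ (k - 1) + 1) by
      intro hcon; nlinarith [hx, sq_nonneg ((2 : ℝ) ^ (k - 1))])]
    rw [if_neg (show ¬(2 * (2 : ℝ) ^ (k - 1) + 1 + (2 * ((2 : ℝ) ^ (k - 1)) ^ 2 + (2 : ℝ) ^ (k - 1)) + (2 * ((2 : ℝ) ^ (k - 1)) ^ 2 - (2 : ℝ) ^ (k - 1)) + (2 * ((2 : ℝ) ^ (k - 1)) ^ 2 + (2 : ℝ) ^ (k - 1)) = 4 * ((2 : ℝ) ^ (k - 1)) ^ 2 + 2 * (2 : ℝ) ^ (k - 1) + 1) by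
      intro hcon; nlinarith [hx, sq_nonneg ((2 : ℝ) ^ (k - 1))])]
    rw [if_neg (show ¬(2 * (2 : ℝ) ^ (k - 1) + 1 + (2 * ((2 : ℝ) ^ (k - 1)) ^ 2 + (2 : ℝ) ^ (k - 1)) + (2 * ((2 : ℝ) ^ (k - 1)) ^ 2 - (2 : ℝ) ^ (k - 1)) + (2 * ((2 : ℝ) ^ (k - 1)) ^ 2 - (2 : ℝ) ^ (k - 1)) = 4 * ((2 : ℝ) ^ (k - 1)) ^ 2 + 2 * (2 : ℝ) ^ (k - 1) + 1) by
      intro hcon; nlinarith [hx, sq_nonneg ((2 : ℝ) ^ (k - 1))])]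
    try simp
  · intro μ hroot
    rw [hchar] at hroot
    have hexp1 : (2 ^ k + 1) - 1 ≠ 0 := by omega
    have hexp2 : 2 ^ (k - 1) * (2 ^ k + 1) - 1 ≠ 0 := by
      have : 2 * 1 ≤ 2 ^ (k - 1) * (2 ^ k + 1) := Nat.mul_le_mul h2k1 (by omega)
      omega
    have hexp3 : 2 ^ (k - 1) * (2 ^ k - 1) - 1 ≠ 0 := by
      have : 2 * 1 ≤ 2 ^ (k - 1) * (2 ^ k - 1) := Nat.mul_le_mul h2k1 (by omega)
      omega
    simp only [Polynomial.IsRoot.def, Polynomial.eval_mul, Polynomial.eval_pow,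
      Polynomial.eval_sub, Polynomial.eval_X, Polynomial.eval_C, mul_eq_zero,
      pow_eq_zero_iff hexp1, pow_eq_zero_iff hexp2, pow_eq_zero_iff hexp3,
      pow_eq_zero_iff (two_ne_zero), sub_eq_zero] at hroot
    rcases hroot with ((((h | h) | h) | h) | h)
    · exact ⟨0, by rw [h]; norm_num⟩
    · exact ⟨((2 ^ k + 1 : ℕ) : ℤ) + ((2 ^ (k - 1) * (2 ^ k + 1) : ℕ) : ℤ) +
        ((2 ^ (k - 1) * (2 ^ k - 1) : ℕ) : ℤ), by rw [h]; push_cast; ring⟩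
    · exact ⟨((2 ^ k + 1 : ℕ) : ℤ) + ((2 ^ (k - 1) * (2 ^ k + 1) : ℕ) : ℤ) +
        ((2 ^ (k - 1) * (2 ^ k - 1) : ℕ) : ℤ) + ((2 ^ k + 1 : ℕ) : ℤ),
        by rw [h]; push_cast; ring⟩
    · exact ⟨((2 ^ k + 1 : ℕ) : ℤ) + ((2 ^ (k - 1) * (2 ^ k + 1) : ℕ) : ℤ) +
        ((2 ^ (k - 1) * (2 ^ k - 1) : ℕ) : ℤ) + ((2 ^ (k - 1) * (2 ^ k + 1) : ℕ) : ℤ),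
        by rw [h]; push_cast; ring⟩
    · exact ⟨((2 ^ k + 1 : ℕ) : ℤ) + ((2 ^ (k - 1) * (2 ^ k + 1) : ℕ) : ℤ) +
        ((2 ^ (k - 1) * (2 ^ k - 1) : ℕ) : ℤ) + ((2 ^ (k - 1) * (2 ^ k - 1) : ℕ) : ℤ),
        by rw [h]; push_cast; ring⟩
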